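/- (Appell property, scalar consequence) Let n ≥ 1 and k ≥ 1. Then ∂_{x_0} P_k^n(x) = k P_{k-1}^n(x) for every paravector x, where ∂_{x_0} denotes the partial derivative with respect to the real coordinate x_0. Equivalently, the coefficients satisfy (k-s) T_s^k(n) + (s+1) T_{s+1}^k(n) = k T_s^{k-1}(n) for 0 ≤ s ≤ k-1. -/

import Mathlib

/-- The coefficients `T_s^k(n) = C(k,s) ((n+1)/2)_{k-s} ((n-1)/2)_s / (n)_k`. -/
noncomputable def T (n k s : ℕ) : ℝ :=
  (k.choose s : ℝ) * ((ascPochhammer ℝ (k - s)).eval (((n : ℝ) + 1) / 2)) *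
    ((ascPochhammer ℝ s).eval (((n : ℝ) - 1) / 2)) / ((ascPochhammer ℝ k).eval (n : ℝ))

lemma T_coeff (n m : ℕ) (hn : 1 ≤ n) (s : ℕ) (hs : s ≤ m) :
    ((m : ℝ) + 1 - s) * T n (m+1) s + ((s : ℝ) + 1) * T n (m+1) (s + 1)
      = ((m : ℝ) + 1) * T n m s := by
  have hpos : (0:ℝ) < (ascPochhammer ℝ m).eval (n : ℝ) :=
    ascPochhammer_pos m _ (by exact_mod_cast hn)
  have hne : ((ascPochhammer ℝ m).eval (n : ℝ)) ≠ 0 := ne_of_gt hpos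
  have hsub : m + 1 - s = (m - s) + 1 := by omega
  have hsub2 : m + 1 - (s + 1) = m - s := by omega
  have h1 : ((m : ℝ) + 1 - s) * ((m+1).choose s : ℝ) = ((m:ℝ)+1) * (m.choose s : ℝ) := by
    have := Nat.choose_mul_succ_eq m s
    have h' : (m.choose s * (m + 1) : ℝ) = ((m+1).choose s * (m + 1 - s) : ℕ) := by
      exact_mod_cast congrArg (Nat.cast : ℕ → ℝ) this
    rw [Nat.cast_mul, Nat.cast_sub (by omega)] at h'
    push_cast at h' ⊢
    linarith
  have h2 : ((s : ℝ) + 1) * ((m+1).choose (s+1) : ℝ) = ((m:ℝ)+1) * (m.choose s : ℝ) := by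
    have := Nat.add_one_mul_choose_eq m s
    have h' : ((m+1) * m.choose s : ℝ) = ((m+1).choose (s+1) * (s+1) : ℕ) := by
      exact_mod_cast congrArg (Nat.cast : ℕ → ℝ) this
    push_cast at h'
    linarith
  unfold T
  rw [hsub, hsub2, ascPochhammer_succ_eval, ascPochhammer_succ_eval (S := ℝ) s,
    ascPochhammer_succ_eval (S := ℝ) m]
  have hnm : ((n:ℝ) + m) ≠ 0 := by positivity
  set a := ((ascPochhammer ℝ (m-s)).eval (((n:ℝ)+1)/2))
  set b := ((ascPochhammer ℝ s).eval (((n:ℝ)-1)/2))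
  set P := (ascPochhammer ℝ m).eval (n:ℝ)
  have hms : ((m - s : ℕ) : ℝ) = (m:ℝ) - s := by
    rw [Nat.cast_sub hs]
  rw [hms]
  have hI : ((n:ℝ)+m) * ((n:ℝ)+m)⁻¹ = 1 := mul_inv_cancel₀ hnm
  simp only [div_eq_mul_inv, mul_inv]
  linear_combination (a*b*P⁻¹*((n:ℝ)+m)⁻¹*(((n:ℝ)+1)/2+((m:ℝ)-s))) * h1 + (a*b*P⁻¹*((n:ℝ)+m)⁻¹*(((n:ℝ)-1)/2+s)) * h2 + (a*b*P⁻¹*((m:ℝ)+1)*(m.choose s:ℝ)) * hI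

lemma shift_hasDeriv {A : Type*} [NormedRing A] [NormedAlgebra ℝ A] (u : A) (x0 : ℝ) :
    HasDerivAt (fun t : ℝ => algebraMap ℝ A t + u) 1 x0 := by
  have h := ((hasDerivAt_id x0).smul_const (1:A)).add_const u
  simpa [Algebra.algebraMap_eq_smul_one] using h

lemma pow_hasDeriv {A : Type*} [NormedRing A] [NormedAlgebra ℝ A] (u : A) (x0 : ℝ) (m : ℕ) :
    HasDerivAt (fun t : ℝ => (algebraMap ℝ A t + u) ^ m)
      ((m : ℝ) • (algebraMap ℝ A x0 + u) ^ (m - 1)) x0 := by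
  induction m with
  | zero => simpa using hasDerivAt_const x0 (1:A)
  | succ m ih =>
    have h := (shift_hasDeriv u x0).mul ih
    have he : (fun t : ℝ => (algebraMap ℝ A t + u) ^ (m+1))
        = fun t : ℝ => (algebraMap ℝ A t + u) * (algebraMap ℝ A t + u) ^ m := by
      funext t; rw [pow_succ']
    rw [he]
    convert h using 1
    · rfl
    cases m with
    | zero => simp
    | succ j =>
      simp only [Nat.add_sub_cancel]
      rw [one_mul, mul_smul_comm, ← pow_succ']
      push_cast
      rw [add_smul, one_smul, add_comm]

lemma pow_hasDeriv' {A : Type*} [NormedRing A] [NormedAlgebra ℝ A] (u : A) (x0 : ℝ) (m : ℕ) :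
    HasDerivAt (fun t : ℝ => (algebraMap ℝ A t - u) ^ m)
      ((m : ℝ) • (algebraMap ℝ A x0 - u) ^ (m - 1)) x0 := by
  simpa [sub_eq_add_neg] using pow_hasDeriv (-u) x0 m

/-- Appell property (scalar consequence): for `n ≥ 1`, `k ≥ 1`, the derivative with
respect to the real coordinate `x_0` of the Clifford-Appell polynomial
`P_k^n(x) = ∑_{s=0}^k T_s^k(n) x^{k-s} x̄^s` (with `x = x_0 + x̲`, `x̄ = x_0 - x̲`,
the vector part `u = x̲` fixed) equals `k P_{k-1}^n(x)`; equivalently, the coefficients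
satisfy `(k-s) T_s^k(n) + (s+1) T_{s+1}^k(n) = k T_s^{k-1}(n)` for `0 ≤ s ≤ k-1`. -/
theorem appell_property (n k : ℕ) (hn : 1 ≤ n) (hk : 1 ≤ k) {A : Type*} [NormedRing A]
    [NormedAlgebra ℝ A] (u : A) (x0 : ℝ) :
    (deriv (fun t : ℝ => ∑ s ∈ Finset.range (k + 1),
        T n k s • ((algebraMap ℝ A t + u) ^ (k - s) * (algebraMap ℝ A t - u) ^ s)) x0
      = (k : ℝ) • ∑ s ∈ Finset.range ((k - 1) + 1),
        T n (k - 1) s • ((algebraMap ℝ A x0 + u) ^ (k - 1 - s) * (algebraMap ℝ A x0 - u) ^ s))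
    ∧ (∀ s : ℕ, s ≤ k - 1 →
        ((k : ℝ) - s) * T n k s + ((s : ℝ) + 1) * T n k (s + 1) = (k : ℝ) * T n (k - 1) s) := by
  obtain ⟨m, rfl⟩ : ∃ m, k = m + 1 := ⟨k - 1, by omega⟩
  simp only [Nat.add_sub_cancel]
  have key : ∀ s : ℕ, s ≤ m →
      ((m:ℝ) + 1 - s) * T n (m+1) s + ((s : ℝ) + 1) * T n (m+1) (s + 1)
        = ((m:ℝ) + 1) * T n m s := fun s hs => T_coeff n m hn s hs
  constructor
  · -- derivative part
    set a := algebraMap ℝ A x0 + u with ha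
    set b := algebraMap ℝ A x0 - u with hb
    have hder : HasDerivAt (fun t : ℝ => ∑ s ∈ Finset.range (m + 1 + 1),
        T n (m+1) s • ((algebraMap ℝ A t + u) ^ (m + 1 - s) * (algebraMap ℝ A t - u) ^ s))
        (∑ s ∈ Finset.range (m + 1 + 1),
          T n (m+1) s • (((m + 1 - s : ℕ) : ℝ) • a ^ (m + 1 - s - 1) * b ^ s
            + a ^ (m + 1 - s) * ((s : ℝ) • b ^ (s - 1)))) x0 := by
      apply HasDerivAt.fun_sum
      intro s _
      exact ((pow_hasDeriv u x0 (m + 1 - s)).mul (pow_hasDeriv' u x0 s)).const_smul (T n (m+1) s)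
    rw [hder.deriv]
    -- now the algebraic rearrangement
    have step : ∀ s ∈ Finset.range (m + 1 + 1),
        T n (m+1) s • (((m + 1 - s : ℕ) : ℝ) • a ^ (m + 1 - s - 1) * b ^ s
            + a ^ (m + 1 - s) * ((s : ℝ) • b ^ (s - 1)))
        = (((m + 1 - s : ℕ) : ℝ) * T n (m+1) s) • (a ^ (m + 1 - s - 1) * b ^ s)
          + ((s : ℝ) * T n (m+1) s) • (a ^ (m + 1 - s) * b ^ (s - 1)) := by
      intro s _
      rw [smul_add, smul_mul_assoc, mul_smul_comm, smul_smul, smul_smul]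
      ring_nf
    rw [Finset.sum_congr rfl step, Finset.sum_add_distrib]
    rw [Finset.sum_range_succ (fun s => (((m + 1 - s : ℕ) : ℝ) * T n (m+1) s) • (a ^ (m + 1 - s - 1) * b ^ s))]
    rw [Finset.sum_range_succ' (fun s => ((s : ℝ) * T n (m+1) s) • (a ^ (m + 1 - s) * b ^ (s - 1)))]
    simp only [Nat.sub_self, Nat.cast_zero, zero_mul, zero_smul, add_zero, Nat.cast_ofNat]
    rw [← Finset.sum_add_distrib, Finset.smul_sum]
    refine Finset.sum_congr rfl fun s hs => ?_
    rw [Finset.mem_range] at hs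
    have hs' : s ≤ m := by omega
    have e1 : m + 1 - s - 1 = m - s := by omega
    have e2 : m + 1 - (s + 1) = m - s := by omega
    have e3 : s + 1 - 1 = s := by omega
    have e4 : ((m + 1 - s : ℕ) : ℝ) = (m : ℝ) + 1 - s := by
      rw [Nat.cast_sub (by omega)]; push_cast; ring
    rw [e1, e2, e3, e4]
    rw [← add_smul, smul_smul]
    push_cast
    rw [key s hs']
  · -- coefficient part
    intro s hs
    have := key s hs
    push_cast at this ⊢
    linarith
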